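/- High-dimensional discrete Brouwer fixed point theorem: let d ≥ 1 and r ∈ Z₊^d with r_i ≥ 2 for all i, and let A = {q ∈ Z^d : 0 ≤ q_i ≤ r_i - 1 for all i}. Suppose φ : A → {1,...,d+1} is a valid coloring, meaning: for every boundary point p (some coordinate p_i ∈ {0, r_i-1}), if some p_i = 0 then φ(p) = max{i : p_i = 0}, and otherwise (all p_i ≠ 0 and some p_i = r_i - 1) φ(p) = d+1. Then there exists a point p ∈ A with 0 ≤ p_i ≤ r_i - 2 for all i such that the unit hypercube K_p = {q ∈ Z^d : q_i ∈ {p_i, p_i+1} for all i} contains points of all d+1 colors. -/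

import Mathlib

open Classical Finset
set_option maxHeartbeats 1000000

namespace DBF

lemma door_iff {n : ℕ} (f : Fin (n+1) → Fin (n+1)) (k : Fin (n+1)) :
    (Finset.univ.erase k).image f = Finset.univ.erase (Fin.last n) ↔
      ((∀ m, m ≠ k → f m ≠ Fin.last n) ∧
        Set.InjOn f (Finset.univ.erase k : Finset (Fin (n+1)))) := by
  constructor
  · intro h
    constructor
    · intro m hm
      have hmem : f m ∈ (Finset.univ.erase k).image f :=
        Finset.mem_image_of_mem _ (by simp [hm])
      rw [h] at hmem
      exact (Finset.mem_erase.1 hmem).1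
    · rw [← Finset.card_image_iff, h]
      simp
  · rintro ⟨h1, h2⟩
    apply Finset.eq_of_subset_of_card_le
    · intro x hx
      obtain ⟨m, hm, rfl⟩ := Finset.mem_image.1 hx
      exact Finset.mem_erase.2 ⟨h1 m (Finset.mem_erase.1 hm).1, Finset.mem_univ _⟩
    · rw [Finset.card_image_of_injOn h2]
      simp

lemma doorcard {n : ℕ} (f : Fin (n+1) → Fin (n+1)) :
    (((Finset.univ.filter (fun k => (Finset.univ.erase k).image f
        = Finset.univ.erase (Fin.last n))).card : ZMod 2))
      = if Function.Bijective f then 1 else 0 := by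
  by_cases hf : Function.Injective f
  · have hbij : Function.Bijective f := Finite.injective_iff_bijective.mp hf
    rw [if_pos hbij]
    obtain ⟨k₀, hk₀⟩ := hbij.2 (Fin.last n)
    have : (Finset.univ.filter (fun k => (Finset.univ.erase k).image f
        = Finset.univ.erase (Fin.last n))) = {k₀} := by
      ext k
      simp only [Finset.mem_filter, Finset.mem_univ, true_and, Finset.mem_singleton,
        door_iff f k]
      constructor
      · rintro ⟨h1, -⟩
        by_contra hk
        exact h1 k₀ (fun h => hk h.symm) hk₀
      · rintro rfl
        refine ⟨fun m hm hfm => hm (hf (hfm.trans hk₀.symm)), fun x _ y _ hxy => hf hxy⟩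
    rw [this]; simp
  · rw [if_neg (fun h => hf h.1)]
    obtain ⟨a, b, hfab, hab⟩ := Function.not_injective_iff.1 hf
    set D := (Finset.univ.filter (fun k => (Finset.univ.erase k).image f
        = Finset.univ.erase (Fin.last n))) with hD
    have hsub : ∀ k ∈ D, k = a ∨ k = b := by
      intro k hk
      by_contra hcon
      push_neg at hcon
      have h2 := ((door_iff f k).1 (Finset.mem_filter.1 hk).2).2
      have : a = b := h2 (by simp [Ne.symm hcon.1]) (by simp [Ne.symm hcon.2]) hfab
      exact hab this
    have hxfer : ∀ x y : Fin (n+1), x ≠ y → f x = f y → x ∈ D → y ∈ D := by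
      intro x y hxy hfxy hx
      obtain ⟨h1, h2⟩ := (door_iff f x).1 (Finset.mem_filter.1 hx).2
      refine Finset.mem_filter.2 ⟨Finset.mem_univ _, (door_iff f y).2 ⟨?_, ?_⟩⟩
      · intro m hm
        by_cases hmx : m = x
        · subst hmx
          rw [hfxy]
          exact h1 y (Ne.symm hxy)
        · exact h1 m hmx
      · intro u hu v hv huv
        simp only [Finset.coe_erase, Set.mem_diff, Finset.mem_coe, Set.mem_singleton_iff]
          at hu hv
        by_cases hux : u = x
        · by_cases hvx : v = x
          · rw [hux, hvx]
          · -- u = x, v ≠ x : f v = f u = f x = f y, v,y ∈ erase x → v = y, contra v ≠ y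
            exfalso
            have : v = y := h2 (by simp [hvx]) (by simp [Ne.symm hxy])
              (by rw [← huv, hux, hfxy])
            exact hv.2 this
        · by_cases hvx : v = x
          · exfalso
            have : u = y := h2 (by simp [hux]) (by simp [Ne.symm hxy])
              (by rw [huv, hvx, hfxy])
            exact hu.2 this
          · exact h2 (by simp [hux]) (by simp [hvx]) huv
    by_cases ha : a ∈ D
    · have hb : b ∈ D := hxfer a b hab hfab ha
      have : D = {a, b} := by
        ext k
        simp only [Finset.mem_insert, Finset.mem_singleton]
        constructor
        · exact hsub k
        · rintro (rfl | rfl); exacts [ha, hb]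
      rw [this, Finset.card_insert_of_notMem (by simp [hab]), Finset.card_singleton]
      simp
      rfl
    · have : D = ∅ := by
        ext k
        simp only [Finset.notMem_empty, iff_false]
        intro hk
        rcases hsub k hk with rfl | rfl
        · exact ha hk
        · exact ha (hxfer k a (Ne.symm hab) hfab.symm hk)
      rw [this]
      simp

lemma chainval (d : ℕ) (g : ℕ → ℕ) (hbd : ∀ t, t < d → g t < d)
    (hstrict : ∀ t, t + 1 < d → g (t+1) < g t) : ∀ t, t < d → g t = d - 1 - t := by
  have upper : ∀ t, t < d → g t ≤ d - 1 - t := by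
    intro t
    induction t with
    | zero => intro ht; have := hbd 0 ht; omega
    | succ m ih =>
      intro ht
      have h1 := ih (by omega)
      have h2 := hstrict m ht
      omega
  have lower : ∀ s t, t < d → d - 1 - t ≤ s → d - 1 - t ≤ g t := by
    intro s
    induction s with
    | zero => intro t ht hs; omega
    | succ m ih =>
      intro t ht hs
      by_cases hlast : t + 1 < d
      · have h1 := ih (t+1) hlast (by omega)
        have h2 := hstrict t hlast
        omega
      · omega
  intro t ht
  have := upper t ht
  have := lower (d - 1 - t) t ht le_rfl
  omega


variable {d : ℕ}

/-- Vertex `m` of the Kuhn simplex with base `b` and permutation `π`. -/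
noncomputable def vtx (b : Fin d → ℤ) (π : Equiv.Perm (Fin d)) (m : ℕ) : Fin d → ℤ :=
  fun i => b i + if ((π.symm i : ℕ) < m) then 1 else 0

/-- The facet obtained by dropping vertex `k` is panchromatic in the first `d` colors. -/
noncomputable def Door (φ : (Fin d → ℤ) → Fin (d+1)) (b : Fin d → ℤ)
    (π : Equiv.Perm (Fin d)) (k : Fin (d+1)) : Prop :=
  (Finset.univ.erase k).image (fun m : Fin (d+1) => φ (vtx b π (m : ℕ)))
    = Finset.univ.erase (Fin.last d)

lemma vtx_bounds {r : Fin d → ℤ} {b : Fin d → ℤ} (hb : ∀ i, 0 ≤ b i ∧ b i ≤ r i - 2)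
    (π : Equiv.Perm (Fin d)) (m : ℕ) : ∀ i, 0 ≤ vtx b π m i ∧ vtx b π m i ≤ r i - 1 := by
  intro i
  have := hb i
  unfold vtx
  split <;> omega

lemma vtx_zero_iff {b : Fin d → ℤ} (hb : ∀ i, 0 ≤ b i) (π : Equiv.Perm (Fin d)) (m : ℕ)
    (i : Fin d) : vtx b π m i = 0 ↔ (b i = 0 ∧ ¬ ((π.symm i : ℕ) < m)) := by
  have := hb i
  unfold vtx
  split <;> omega

/-- Main chain analysis: in a window of `d` consecutive vertices all having some zero
coordinate, with pairwise distinct colors, the maxima of zero-sets are forced, and the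
permutation/base are partially forced. -/
lemma window (r : Fin d → ℤ)
    (φ : (Fin d → ℤ) → Fin (d + 1))
    (hvalid : ∀ p : Fin d → ℤ, (∀ i, 0 ≤ p i ∧ p i ≤ r i - 1) →
      (∀ h : (Finset.univ.filter (fun i => p i = 0)).Nonempty,
        φ p = Fin.castSucc ((Finset.univ.filter (fun i => p i = 0)).max' h)) ∧
      ((∀ i, p i ≠ 0) → (∃ i, p i = r i - 1) → φ p = Fin.last d))
    (b : Fin d → ℤ) (π : Equiv.Perm (Fin d))
    (hb : ∀ i, 0 ≤ b i ∧ b i ≤ r i - 2) (a : ℕ)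
    (hne : ∀ t, t < d → (Finset.univ.filter (fun i => vtx b π (a+t) i = 0)).Nonempty)
    (hinj : ∀ t t', t < d → t' < d →
      φ (vtx b π (a+t)) = φ (vtx b π (a+t')) → t = t') :
    (∀ t (ht : t < d),
      (((Finset.univ.filter (fun i => vtx b π (a+t) i = 0)).max' (hne t ht)) : ℕ) = d - 1 - t)
    ∧ (∀ t (ht : t + 1 < d),
        b ⟨d-1-t, by omega⟩ = 0 ∧ ((π.symm ⟨d-1-t, by omega⟩ : ℕ) = a + t)) := by
  have hb0 : ∀ i, 0 ≤ b i := fun i => (hb i).1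
  have hφ : ∀ t (ht : t < d), φ (vtx b π (a+t)) =
      Fin.castSucc ((Finset.univ.filter (fun i => vtx b π (a+t) i = 0)).max' (hne t ht)) :=
    fun t ht => (hvalid _ (vtx_bounds hb π (a+t))).1 (hne t ht)
  have hZmono : ∀ m m' : ℕ, m ≤ m' →
      (Finset.univ.filter (fun i => vtx b π m' i = 0))
        ⊆ (Finset.univ.filter (fun i => vtx b π m i = 0)) := by
    intro m m' hmm i hi
    simp only [Finset.mem_filter, Finset.mem_univ, true_and] at hi ⊢
    rw [vtx_zero_iff hb0] at hi ⊢
    exact ⟨hi.1, fun h => hi.2 (h.trans_le hmm)⟩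
  -- the strictly decreasing chain of maxima
  set g : ℕ → ℕ := fun t =>
    if ht : t < d then (((Finset.univ.filter (fun i => vtx b π (a+t) i = 0)).max' (hne t ht)) : ℕ)
    else 0 with hg
  have hgbd : ∀ t, t < d → g t < d := by
    intro t ht
    rw [hg]
    simp only [dif_pos ht]
    exact (((Finset.univ.filter (fun i => vtx b π (a+t) i = 0)).max' (hne t ht))).isLt
  have hgstrict : ∀ t, t + 1 < d → g (t+1) < g t := by
    intro t ht
    have ht' : t < d := by omega
    rw [hg]
    simp only [dif_pos ht, dif_pos ht']
    have hle : (Finset.univ.filter (fun i => vtx b π (a+(t+1)) i = 0)).max' (hne _ ht)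
        ≤ (Finset.univ.filter (fun i => vtx b π (a+t) i = 0)).max' (hne _ ht') :=
      Finset.max'_subset _ (hZmono _ _ (by omega))
    have hnee : (Finset.univ.filter (fun i => vtx b π (a+(t+1)) i = 0)).max' (hne _ ht)
        ≠ (Finset.univ.filter (fun i => vtx b π (a+t) i = 0)).max' (hne _ ht') := by
      intro heq
      have : φ (vtx b π (a+(t+1))) = φ (vtx b π (a+t)) := by
        rw [hφ _ ht, hφ _ ht', heq]
      have := hinj _ _ ht ht' this
      omega
    exact Fin.lt_iff_val_lt_val.mp (lt_of_le_of_ne hle hnee)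
  have hgval := chainval d g hgbd hgstrict
  have hval : ∀ t (ht : t < d),
      (((Finset.univ.filter (fun i => vtx b π (a+t) i = 0)).max' (hne t ht)) : ℕ) = d - 1 - t := by
    intro t ht
    have := hgval t ht
    rw [hg] at this
    simpa [dif_pos ht] using this
  refine ⟨hval, ?_⟩
  intro t ht
  have ht' : t < d := by omega
  set Z1 := Finset.univ.filter (fun i => vtx b π (a+t) i = 0) with hZ1
  set Z2 := Finset.univ.filter (fun i => vtx b π (a+(t+1)) i = 0) with hZ2
  set c := Z1.max' (hne t ht') with hc
  have hcval : (c : ℕ) = d - 1 - t := hval t ht'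
  have hcZ1 : c ∈ Z1 := Finset.max'_mem _ _
  have hcZ2 : c ∉ Z2 := by
    intro hmem
    have h1 : c ≤ Z2.max' (hne (t+1) ht) := Finset.le_max' _ _ hmem
    have h2 : ((Z2.max' (hne (t+1) ht)) : ℕ) = d - 1 - (t+1) := hval (t+1) ht
    rw [Fin.le_def, hcval, h2] at h1
    omega
  have h1 : vtx b π (a+t) c = 0 := by
    simpa [hZ1] using hcZ1
  have h2 : ¬ (vtx b π (a+(t+1)) c = 0) := by
    simpa [hZ2] using hcZ2
  rw [vtx_zero_iff hb0] at h1 h2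
  push_neg at h2
  have hbc : b c = 0 := h1.1
  have hps : ((π.symm c : ℕ)) = a + t := by
    have := h1.2
    have := h2 h1.1
    omega
  have hceq : c = (⟨d-1-t, by omega⟩ : Fin d) := Fin.ext hcval
  rw [hceq] at hbc hps
  exact ⟨hbc, hps⟩


variable {d : ℕ}

lemma no_top_door (hd : 0 < d) (r : Fin d → ℤ) (hr : ∀ i, 2 ≤ r i)
    (φ : (Fin d → ℤ) → Fin (d + 1))
    (hvalid : ∀ p : Fin d → ℤ, (∀ i, 0 ≤ p i ∧ p i ≤ r i - 1) →
      (∀ h : (Finset.univ.filter (fun i => p i = 0)).Nonempty,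
        φ p = Fin.castSucc ((Finset.univ.filter (fun i => p i = 0)).max' h)) ∧
      ((∀ i, p i ≠ 0) → (∃ i, p i = r i - 1) → φ p = Fin.last d))
    (b : Fin d → ℤ) (π : Equiv.Perm (Fin d))
    (hb : ∀ i, 0 ≤ b i ∧ b i ≤ r i - 2)
    (hdoor : Door φ b π 0)
    (hbd : b (π ⟨0, hd⟩) = r (π ⟨0, hd⟩) - 2) : False := by
  obtain ⟨h1, h2⟩ := (door_iff _ _).1 hdoor
  set j₀ := π ⟨0, hd⟩ with hj₀
  have hsymmj : π.symm j₀ = ⟨0, hd⟩ := Equiv.symm_apply_apply _ _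
  have hvtxj : ∀ m : ℕ, 0 < m → vtx b π m j₀ = r j₀ - 1 := by
    intro m hm
    unfold vtx
    rw [hsymmj]
    simp only [if_pos hm]
    omega
  -- nonempty zero sets
  have hne : ∀ t, t < d → (Finset.univ.filter (fun i => vtx b π (1+t) i = 0)).Nonempty := by
    intro t ht
    by_contra hemp
    rw [Finset.not_nonempty_iff_eq_empty, Finset.filter_eq_empty_iff] at hemp
    have hnz : ∀ i, vtx b π (1+t) i ≠ 0 := fun i => hemp (Finset.mem_univ i)
    have hlast : φ (vtx b π (1+t)) = Fin.last d :=
      (hvalid _ (vtx_bounds hb π (1+t))).2 hnz ⟨j₀, hvtxj _ (by omega)⟩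
    have hm0 : (⟨1+t, by omega⟩ : Fin (d+1)) ≠ 0 := by
      intro h
      have := Fin.mk.injEq (1+t) (by omega : 1+t < d+1) 0 (by omega) ▸ h
      simp [Fin.ext_iff] at h
    exact h1 ⟨1+t, by omega⟩ hm0 hlast
  have hinj : ∀ t t', t < d → t' < d →
      φ (vtx b π (1+t)) = φ (vtx b π (1+t')) → t = t' := by
    intro t t' ht ht' heq
    have hmem : (⟨1+t, by omega⟩ : Fin (d+1)) ∈ (Finset.univ.erase (0 : Fin (d+1)) : Finset _) := by
      simp [Fin.ext_iff]
    have hmem' : (⟨1+t', by omega⟩ : Fin (d+1)) ∈ (Finset.univ.erase (0 : Fin (d+1)) : Finset _) := by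
      simp [Fin.ext_iff]
    have := h2 (by exact_mod_cast hmem) (by exact_mod_cast hmem') heq
    simpa [Fin.ext_iff] using this
  obtain ⟨hval, hdrop⟩ := window r φ hvalid b π hb 1 hne hinj
  -- π.symm ⟨0⟩ = ⟨0⟩
  have hs0 : π.symm ⟨0, hd⟩ = ⟨0, hd⟩ := by
    set s := π.symm ⟨0, hd⟩ with hs
    by_contra hne0
    have hsval : (s : ℕ) ≠ 0 := fun h => hne0 (Fin.ext h)
    have hslt := s.isLt
    set t := (s : ℕ) - 1 with htdef
    have htlt : t + 1 < d := by omega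
    have hd2 := (hdrop t htlt).2
    have : π.symm ⟨d-1-t, by omega⟩ = s := Fin.ext (by rw [hd2]; omega)
    have := π.symm.injective (this.trans hs)
    have : d - 1 - t = 0 := by simpa [Fin.ext_iff] using this
    omega
  have hj0 : j₀ = ⟨0, hd⟩ := π.symm.injective (hsymmj.trans hs0.symm)
  -- contradiction at t = d-1
  have hvd := hval (d-1) (by omega)
  set M := (Finset.univ.filter (fun i => vtx b π (1+(d-1)) i = 0)).max' (hne (d-1) (by omega))
    with hM
  have hMmem : M ∈ Finset.univ.filter (fun i => vtx b π (1+(d-1)) i = 0) := Finset.max'_mem _ _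
  have hMzero : vtx b π (1+(d-1)) M = 0 := by
    simpa using hMmem
  have hMval : (M : ℕ) = 0 := by rw [hvd]; omega
  have hMeq : M = j₀ := by rw [hj0]; exact Fin.ext hMval
  rw [hMeq, hvtxj _ (by omega)] at hMzero
  have := hr j₀
  omega

lemma bottom_door_unique (hd : 0 < d) (r : Fin d → ℤ) (hr : ∀ i, 2 ≤ r i)
    (φ : (Fin d → ℤ) → Fin (d + 1))
    (hvalid : ∀ p : Fin d → ℤ, (∀ i, 0 ≤ p i ∧ p i ≤ r i - 1) →
      (∀ h : (Finset.univ.filter (fun i => p i = 0)).Nonempty,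
        φ p = Fin.castSucc ((Finset.univ.filter (fun i => p i = 0)).max' h)) ∧
      ((∀ i, p i ≠ 0) → (∃ i, p i = r i - 1) → φ p = Fin.last d))
    (b : Fin d → ℤ) (π : Equiv.Perm (Fin d))
    (hb : ∀ i, 0 ≤ b i ∧ b i ≤ r i - 2)
    (hdoor : Door φ b π (Fin.last d))
    (hbd : b (π ⟨d-1, by omega⟩) = 0) : b = (fun _ => 0) ∧ π = Fin.revPerm := by
  obtain ⟨h1, h2⟩ := (door_iff _ _).1 hdoor
  have hdd : d - 1 < d := by omega
  obtain ⟨j₀, hj₀⟩ : ∃ j, π ⟨d-1, hdd⟩ = j := ⟨_, rfl⟩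
  have hbd : b j₀ = 0 := by rw [← hj₀]; convert hbd using 3
  have hsymmj : π.symm j₀ = ⟨d-1, hdd⟩ := by rw [← hj₀]; exact Equiv.symm_apply_apply _ _
  have hne : ∀ t, t < d → (Finset.univ.filter (fun i => vtx b π (0+t) i = 0)).Nonempty := by
    intro t ht
    refine ⟨j₀, ?_⟩
    simp only [Finset.mem_filter, Finset.mem_univ, true_and]
    unfold vtx
    rw [hsymmj]
    have : ¬ ((d-1 : ℕ) < 0 + t) := by omega
    simp only [if_neg this]
    omega
  have hinj : ∀ t t', t < d → t' < d →
      φ (vtx b π (0+t)) = φ (vtx b π (0+t')) → t = t' := by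
    intro t t' ht ht' heq
    have hmem : (⟨0+t, by omega⟩ : Fin (d+1)) ∈ (Finset.univ.erase (Fin.last d) : Finset _) := by
      simp [Fin.ext_iff]; omega
    have hmem' : (⟨0+t', by omega⟩ : Fin (d+1)) ∈ (Finset.univ.erase (Fin.last d) : Finset _) := by
      simp [Fin.ext_iff]; omega
    have := h2 (by exact_mod_cast hmem) (by exact_mod_cast hmem') heq
    simpa [Fin.ext_iff] using this
  obtain ⟨hval, hdrop⟩ := window r φ hvalid b π hb 0 hne hinj
  have hsymm0 : π.symm ⟨0, hd⟩ = ⟨d-1, by omega⟩ := by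
    have hslt := (π.symm ⟨0, hd⟩).isLt
    by_cases hsval : ((π.symm ⟨0, hd⟩ : Fin d) : ℕ) = d - 1
    · exact Fin.ext hsval
    · exfalso
      have htlt : ((π.symm ⟨0, hd⟩ : Fin d) : ℕ) + 1 < d := by omega
      have hd2 := (hdrop ((π.symm ⟨0, hd⟩ : Fin d) : ℕ) htlt).2
      have h3 : π.symm ⟨d-1-((π.symm ⟨0, hd⟩ : Fin d) : ℕ), by omega⟩ = π.symm ⟨0, hd⟩ :=
        Fin.ext (by rw [hd2]; omega)
      have h4 := π.symm.injective h3
      have : d - 1 - ((π.symm ⟨0, hd⟩ : Fin d) : ℕ) = 0 := by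
        simpa [Fin.ext_iff] using h4
      omega
  have hj0 : j₀ = ⟨0, hd⟩ := π.symm.injective (hsymmj.trans (by rw [hsymm0]))
  have hsymm : ∀ x : Fin d, π.symm x = Fin.rev x := by
    intro x
    by_cases hx : (x : ℕ) = 0
    · have hxeq : x = ⟨0, hd⟩ := Fin.ext hx
      rw [hxeq, hsymm0]
      refine Fin.ext ?_
      rw [Fin.val_rev]
    · set t := d - 1 - (x : ℕ) with htdef
      have hxlt := x.isLt
      have htlt : t + 1 < d := by omega
      have hd2 := (hdrop t htlt).2
      have hxt : (⟨d-1-t, by omega⟩ : Fin d) = x := Fin.ext (show d - 1 - t = (x : ℕ) by omega)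
      rw [hxt] at hd2
      refine Fin.ext ?_
      rw [Fin.val_rev, hd2]
      omega
  have hπ : π = Fin.revPerm := by
    apply Equiv.ext
    intro x
    have := hsymm (Fin.rev x)
    rw [Fin.rev_rev] at this
    have : π x = Fin.rev x := by
      conv_lhs => rw [← this]
      rw [Equiv.apply_symm_apply]
    rw [this]
    rfl
  refine ⟨?_, hπ⟩
  funext i
  by_cases hi : (i : ℕ) = 0
  · have : i = j₀ := by rw [hj0]; exact Fin.ext hi
    rw [this]; exact hbd
  · set t := d - 1 - (i : ℕ) with htdef
    have hilt := i.isLt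
    have htlt : t + 1 < d := by omega
    have hd1 := (hdrop t htlt).1
    have hit : (⟨d-1-t, by omega⟩ : Fin d) = i := Fin.ext (show d - 1 - t = (i : ℕ) by omega)
    rw [hit] at hd1
    exact hd1

lemma t0_door (hd : 0 < d) (r : Fin d → ℤ) (hr : ∀ i, 2 ≤ r i)
    (φ : (Fin d → ℤ) → Fin (d + 1))
    (hvalid : ∀ p : Fin d → ℤ, (∀ i, 0 ≤ p i ∧ p i ≤ r i - 1) →
      (∀ h : (Finset.univ.filter (fun i => p i = 0)).Nonempty,
        φ p = Fin.castSucc ((Finset.univ.filter (fun i => p i = 0)).max' h)) ∧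
      ((∀ i, p i ≠ 0) → (∃ i, p i = r i - 1) → φ p = Fin.last d)) :
    Door φ (fun _ => 0) Fin.revPerm (Fin.last d) := by
  have hψ : ∀ m : Fin (d+1), m ≠ Fin.last d →
      φ (vtx (fun _ => 0) Fin.revPerm (m : ℕ)) = Fin.castSucc ⟨d-1-(m : ℕ), by omega⟩ := by
    intro m hm
    have hmv : (m : ℕ) < d := Fin.val_lt_last hm
    set p := vtx (fun _ => 0) Fin.revPerm ((m : ℕ)) with hp
    have hpval : ∀ i : Fin d, p i = if (d - ((i : ℕ)+1) < (m : ℕ)) then 1 else 0 := by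
      intro i
      rw [hp]
      unfold vtx
      have : (Fin.revPerm.symm i : ℕ) = d - ((i : ℕ)+1) := by
        have : (Fin.revPerm : Equiv.Perm (Fin d)).symm i = Fin.rev i := rfl
        rw [this, Fin.val_rev]
      rw [this]
      simp
    have hbounds : ∀ i, 0 ≤ p i ∧ p i ≤ r i - 1 := by
      intro i
      rw [hpval i]
      have := hr i
      split <;> omega
    have hkey : (⟨d-1-(m:ℕ), by omega⟩ : Fin d) ∈
        Finset.univ.filter (fun i => p i = 0) := by
      simp only [Finset.mem_filter, Finset.mem_univ, true_and, hpval]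
      rw [if_neg (by omega)]
    have hZne : (Finset.univ.filter (fun i => p i = 0)).Nonempty := ⟨_, hkey⟩
    have hmax : (Finset.univ.filter (fun i => p i = 0)).max' hZne
        = ⟨d-1-(m:ℕ), by omega⟩ := by
      apply le_antisymm
      · apply Finset.max'_le
        intro x hx
        simp only [Finset.mem_filter, Finset.mem_univ, true_and, hpval] at hx
        have hxlt := x.isLt
        have : ¬ (d - ((x:ℕ)+1) < (m:ℕ)) := by
          by_contra hcon
          rw [if_pos hcon] at hx
          omega
        rw [Fin.le_def]
        simp only
        omega
      · exact Finset.le_max' _ _ hkey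
    rw [(hvalid p hbounds).1 hZne, hmax]
  unfold Door
  apply Finset.eq_of_subset_of_card_le
  · intro x hx
    obtain ⟨m, hm, rfl⟩ := Finset.mem_image.1 hx
    have hmne := (Finset.mem_erase.1 hm).1
    rw [hψ m hmne]
    exact Finset.mem_erase.2 ⟨(Fin.castSucc_lt_last _).ne, Finset.mem_univ _⟩
  · have hinj : Set.InjOn (fun m : Fin (d+1) => φ (vtx (fun _ => 0) Fin.revPerm ((m : ℕ))))
        (Finset.univ.erase (Fin.last d) : Finset (Fin (d+1))) := by
      intro u hu v hv huv
      simp only [Finset.coe_erase, Set.mem_diff, Finset.mem_coe, Set.mem_singleton_iff] at hu hv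
      have hune : u ≠ Fin.last d := hu.2
      have hvne : v ≠ Fin.last d := hv.2
      have hulv := Fin.val_lt_last hune
      have hvlv := Fin.val_lt_last hvne
      simp only at huv
      rw [hψ u hune, hψ v hvne] at huv
      have := Fin.castSucc_injective _ huv
      simp only [Fin.mk.injEq] at this
      exact Fin.ext (by omega)
    rw [Finset.card_image_of_injOn hinj]

/-- The cyclic shift permutation `t ↦ t+1 (mod d)`. -/
def cyc (hd : 0 < d) : Equiv.Perm (Fin d) where
  toFun t := ⟨((t : ℕ) + 1) % d, Nat.mod_lt _ hd⟩
  invFun t := ⟨((t : ℕ) + (d - 1)) % d, Nat.mod_lt _ hd⟩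
  left_inv t := by
    apply Fin.ext
    simp only [Nat.mod_add_mod]
    have h1 : (t : ℕ) + 1 + (d - 1) = (t : ℕ) + d := by omega
    rw [h1, Nat.add_mod_right, Nat.mod_eq_of_lt t.isLt]
  right_inv t := by
    apply Fin.ext
    simp only [Nat.mod_add_mod]
    have h1 : (t : ℕ) + (d - 1) + 1 = (t : ℕ) + d := by omega
    rw [h1, Nat.add_mod_right, Nat.mod_eq_of_lt t.isLt]

lemma cyc_val (hd : 0 < d) (t : Fin d) :
    ((cyc hd t : Fin d) : ℕ) = if (t : ℕ) = d - 1 then 0 else (t : ℕ) + 1 := by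
  show ((t : ℕ) + 1) % d = if (t : ℕ) = d - 1 then 0 else (t : ℕ) + 1
  by_cases h : (t : ℕ) = d - 1
  · rw [if_pos h, h]
    have : d - 1 + 1 = d := by omega
    rw [this, Nat.mod_self]
  · rw [if_neg h]
    exact Nat.mod_eq_of_lt (by have := t.isLt; omega)

lemma cyc_symm_val (hd : 0 < d) (t : Fin d) :
    (((cyc hd).symm t : Fin d) : ℕ) = if (t : ℕ) = 0 then d - 1 else (t : ℕ) - 1 := by
  show ((t : ℕ) + (d - 1)) % d = if (t : ℕ) = 0 then d - 1 else (t : ℕ) - 1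
  by_cases h : (t : ℕ) = 0
  · rw [if_pos h, h, Nat.zero_add]
    exact Nat.mod_eq_of_lt (by omega)
  · rw [if_neg h]
    have h1 : (t : ℕ) + (d - 1) = ((t : ℕ) - 1) + d := by omega
    rw [h1, Nat.add_mod_right]
    exact Nat.mod_eq_of_lt (by have := t.isLt; omega)

/-- Increment `b` at coordinate `e`. -/
def bump (b : Fin d → ℤ) (e : Fin d) : Fin d → ℤ := fun i => if i = e then b i + 1 else b i

/-- Decrement `b` at coordinate `e`. -/
def dropf (b : Fin d → ℤ) (e : Fin d) : Fin d → ℤ := fun i => if i = e then b i - 1 else b i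

lemma bump_dropf (b : Fin d → ℤ) (e : Fin d) : bump (dropf b e) e = b := by
  funext i
  unfold bump dropf
  by_cases h : i = e <;> simp [h]

lemma dropf_bump (b : Fin d → ℤ) (e : Fin d) : dropf (bump b e) e = b := by
  funext i
  unfold bump dropf
  by_cases h : i = e <;> simp [h]

lemma vtx_mid (b : Fin d → ℤ) (π : Equiv.Perm (Fin d)) (k : ℕ) (hk1 : k - 1 < d) (hkd : k < d)
    (m : ℕ) (hm : m ≠ k) :
    vtx b (π * Equiv.swap (⟨k-1, hk1⟩ : Fin d) ⟨k, hkd⟩) m = vtx b π m := by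
  funext i
  show b i + (if ((((Equiv.swap (⟨k-1, hk1⟩ : Fin d) ⟨k, hkd⟩).symm (π.symm i)) : Fin d) : ℕ) < m then 1 else 0)
      = b i + (if ((π.symm i : Fin d) : ℕ) < m then 1 else 0)
  rw [Equiv.symm_swap]
  by_cases h1 : π.symm i = (⟨k-1, hk1⟩ : Fin d)
  · rw [h1, Equiv.swap_apply_left]
    show b i + (if k < m then 1 else 0) = b i + (if k - 1 < m then 1 else 0)
    split_ifs <;> omega
  · by_cases h2 : π.symm i = (⟨k, hkd⟩ : Fin d)
    · rw [h2, Equiv.swap_apply_right]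
      show b i + (if k - 1 < m then 1 else 0) = b i + (if k < m then 1 else 0)
      split_ifs <;> omega
    · rw [Equiv.swap_apply_of_ne_of_ne h1 h2]

lemma vtx_up (hd : 0 < d) (b : Fin d → ℤ) (π : Equiv.Perm (Fin d)) (m : ℕ) (hm : m < d) :
    vtx (bump b (π ⟨0, hd⟩)) (π * cyc hd) m = vtx b π (m+1) := by
  funext i
  show bump b (π ⟨0, hd⟩) i + (if (((cyc hd).symm (π.symm i) : Fin d) : ℕ) < m then 1 else 0)
      = b i + (if ((π.symm i : Fin d) : ℕ) < m + 1 then 1 else 0)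
  rw [cyc_symm_val]
  by_cases hi : i = π ⟨0, hd⟩
  · subst hi
    rw [Equiv.symm_apply_apply]
    show (if (π (⟨0, hd⟩ : Fin d)) = π ⟨0, hd⟩ then b (π ⟨0, hd⟩) + 1 else b (π ⟨0, hd⟩))
        + (if (if ((⟨0, hd⟩ : Fin d) : ℕ) = 0 then d - 1 else ((⟨0, hd⟩ : Fin d) : ℕ) - 1) < m then 1 else 0)
      = b (π ⟨0, hd⟩) + (if ((⟨0, hd⟩ : Fin d) : ℕ) < m + 1 then 1 else 0)
    rw [if_pos rfl]
    show b (π ⟨0, hd⟩) + 1 + (if (if (0:ℕ) = 0 then d - 1 else 0 - 1) < m then 1 else 0)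
      = b (π ⟨0, hd⟩) + (if (0:ℕ) < m + 1 then 1 else 0)
    rw [if_pos rfl, if_neg (by omega), if_pos (by omega)]
    ring
  · have hs : π.symm i ≠ (⟨0, hd⟩ : Fin d) := by
      intro h
      exact hi (by rw [← h, Equiv.apply_symm_apply])
    have hsval : ((π.symm i : Fin d) : ℕ) ≠ 0 := fun h => hs (Fin.ext h)
    rw [if_neg hsval]
    have hbi : bump b (π ⟨0, hd⟩) i = b i := if_neg hi
    rw [hbi]
    congr 1
    have hslt := (π.symm i).isLt
    split_ifs <;> omega

lemma vtx_down (hd : 0 < d) (b : Fin d → ℤ) (π : Equiv.Perm (Fin d)) (m : ℕ)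
    (hm1 : 1 ≤ m) (hm : m ≤ d) :
    vtx (dropf b (π ⟨d-1, by omega⟩)) (π * (cyc hd).symm) m = vtx b π (m-1) := by
  have key := vtx_up hd (dropf b (π ⟨d-1, by omega⟩)) (π * (cyc hd).symm) (m-1) (by omega)
  have h1 : (π * (cyc hd).symm) ⟨0, hd⟩ = π ⟨d-1, by omega⟩ := by
    show π ((cyc hd).symm ⟨0, hd⟩) = _
    congr 1
    apply Fin.ext
    rw [cyc_symm_val]
    simp
  have h2 : π * (cyc hd).symm * cyc hd = π := by
    rw [mul_assoc]
    simp [Equiv.Perm.symm_mul]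
  rw [h1, bump_dropf, h2] at key
  have h3 : m - 1 + 1 = m := by omega
  rw [h3] at key
  exact key.symm


lemma door_mid (φ : (Fin d → ℤ) → Fin (d+1)) (b : Fin d → ℤ) (π : Equiv.Perm (Fin d))
    (k : Fin (d+1)) (hk1 : (k : ℕ) - 1 < d) (hkd : (k : ℕ) < d) :
    Door φ b (π * Equiv.swap (⟨(k : ℕ)-1, hk1⟩ : Fin d) ⟨(k : ℕ), hkd⟩) k ↔ Door φ b π k := by
  unfold Door
  have him : (Finset.univ.erase k).image
      (fun m : Fin (d+1) => φ (vtx b (π * Equiv.swap (⟨(k : ℕ)-1, hk1⟩ : Fin d) ⟨(k : ℕ), hkd⟩) (m : ℕ)))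
      = (Finset.univ.erase k).image (fun m : Fin (d+1) => φ (vtx b π (m : ℕ))) := by
    apply Finset.image_congr
    intro m hm
    have hmk : m ≠ k := (Finset.mem_erase.1 (by exact_mod_cast hm)).1
    have hmkv : (m : ℕ) ≠ (k : ℕ) := fun h => hmk (Fin.ext h)
    simp only
    rw [vtx_mid b π (k : ℕ) hk1 hkd (m : ℕ) hmkv]
  rw [him]

lemma door_up (hd : 0 < d) (φ : (Fin d → ℤ) → Fin (d+1)) (b : Fin d → ℤ)
    (π : Equiv.Perm (Fin d)) :
    Door φ b π 0 ↔ Door φ (bump b (π ⟨0, hd⟩)) (π * cyc hd) (Fin.last d) := by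
  unfold Door
  have him : (Finset.univ.erase (Fin.last d)).image
      (fun m : Fin (d+1) => φ (vtx (bump b (π ⟨0, hd⟩)) (π * cyc hd) (m : ℕ)))
      = (Finset.univ.erase (0 : Fin (d+1))).image (fun m : Fin (d+1) => φ (vtx b π (m : ℕ))) := by
    ext x
    simp only [Finset.mem_image, Finset.mem_erase, Finset.mem_univ, and_true]
    constructor
    · rintro ⟨m, hm, rfl⟩
      have hmv : (m : ℕ) < d := Fin.val_lt_last hm
      refine ⟨⟨(m : ℕ)+1, by omega⟩, ⟨?_, ?_⟩⟩
      · intro h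
        have : (m : ℕ) + 1 = 0 := by
          have h' := congrArg Fin.val h
          simp only [Fin.val_zero] at h'
          exact h'
        omega
      · exact (congrArg φ (vtx_up hd b π (m : ℕ) hmv)).symm
    · rintro ⟨m, hm, rfl⟩
      have hm0 : (m : ℕ) ≠ 0 := fun h => hm (Fin.ext h)
      have hmle : (m : ℕ) ≤ d := by have := m.isLt; omega
      refine ⟨⟨(m : ℕ)-1, by omega⟩, ⟨?_, ?_⟩⟩
      · intro h
        have : (m : ℕ) - 1 = d := by simpa [Fin.ext_iff] using h
        omega
      · show φ (vtx (bump b (π ⟨0, hd⟩)) (π * cyc hd) ((m : ℕ)-1)) = φ (vtx b π (m : ℕ))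
        have h3 : (m : ℕ) - 1 + 1 = (m : ℕ) := by omega
        rw [vtx_up hd b π ((m : ℕ)-1) (by omega), h3]
  rw [him]

lemma door_down (hd : 0 < d) (φ : (Fin d → ℤ) → Fin (d+1)) (b : Fin d → ℤ)
    (π : Equiv.Perm (Fin d)) :
    Door φ b π (Fin.last d) ↔
      Door φ (dropf b (π ⟨d-1, by omega⟩)) (π * (cyc hd).symm) 0 := by
  have key := door_up hd φ (dropf b (π ⟨d-1, by omega⟩)) (π * (cyc hd).symm)
  have h1 : (π * (cyc hd).symm) ⟨0, hd⟩ = π ⟨d-1, by omega⟩ := by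
    show π ((cyc hd).symm ⟨0, hd⟩) = _
    congr 1
    apply Fin.ext
    rw [cyc_symm_val]
    simp
  have h2 : π * (cyc hd).symm * cyc hd = π := by
    rw [mul_assoc]
    simp [Equiv.Perm.symm_mul]
  rw [h1, bump_dropf, h2] at key
  exact key.symm


/-- The pairing on door triples. -/
noncomputable def partner (hd : 0 < d) (t : (Fin d → ℤ) × Equiv.Perm (Fin d) × Fin (d+1)) :
    (Fin d → ℤ) × Equiv.Perm (Fin d) × Fin (d+1) :=
  if _h0 : t.2.2 = 0 then
    (bump t.1 (t.2.1 ⟨0, hd⟩), t.2.1 * cyc hd, Fin.last d)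
  else if hl : t.2.2 = Fin.last d then
    (dropf t.1 (t.2.1 ⟨d-1, by omega⟩), t.2.1 * (cyc hd).symm, 0)
  else
    (t.1, t.2.1 * Equiv.swap (⟨(t.2.2 : ℕ) - 1, by omega⟩ : Fin d)
        (⟨(t.2.2 : ℕ), by
          have h1 := t.2.2.isLt
          have h2 : (t.2.2 : ℕ) ≠ d := fun h => hl (Fin.ext h)
          omega⟩ : Fin d), t.2.2)

lemma last_ne_zero (hd : 0 < d) : (Fin.last d) ≠ (0 : Fin (d+1)) := by
  intro h
  have := congrArg Fin.val h
  simp only [Fin.val_last, Fin.val_zero] at this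
  omega

lemma partner_eval0 (hd : 0 < d) (b : Fin d → ℤ) (π : Equiv.Perm (Fin d)) :
    partner hd (b, π, 0) = (bump b (π ⟨0, hd⟩), π * cyc hd, Fin.last d) := by
  unfold partner
  rw [dif_pos rfl]

lemma partner_evalLast (hd : 0 < d) (b : Fin d → ℤ) (π : Equiv.Perm (Fin d)) :
    partner hd (b, π, Fin.last d)
      = (dropf b (π ⟨d-1, by omega⟩), π * (cyc hd).symm, (0 : Fin (d+1))) := by
  unfold partner
  rw [dif_neg (last_ne_zero hd), dif_pos rfl]

lemma partner_evalMid (hd : 0 < d) (b : Fin d → ℤ) (π : Equiv.Perm (Fin d)) (k : Fin (d+1))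
    (hk0 : k ≠ 0) (hkl : k ≠ Fin.last d) (hk1 : (k : ℕ) - 1 < d) (hkd : (k : ℕ) < d) :
    partner hd (b, π, k)
      = (b, π * Equiv.swap (⟨(k : ℕ) - 1, hk1⟩ : Fin d) (⟨(k : ℕ), hkd⟩ : Fin d), k) := by
  unfold partner
  rw [dif_neg hk0, dif_neg hkl]

lemma props_zero (hd : 0 < d) (r : Fin d → ℤ) (hr : ∀ i, 2 ≤ r i)
    (φ : (Fin d → ℤ) → Fin (d + 1))
    (hvalid : ∀ p : Fin d → ℤ, (∀ i, 0 ≤ p i ∧ p i ≤ r i - 1) →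
      (∀ h : (Finset.univ.filter (fun i => p i = 0)).Nonempty,
        φ p = Fin.castSucc ((Finset.univ.filter (fun i => p i = 0)).max' h)) ∧
      ((∀ i, p i ≠ 0) → (∃ i, p i = r i - 1) → φ p = Fin.last d))
    (b : Fin d → ℤ) (π : Equiv.Perm (Fin d))
    (hb : ∀ i, 0 ≤ b i ∧ b i ≤ r i - 2) (hdoor : Door φ b π 0) :
    (∀ i, 0 ≤ bump b (π ⟨0, hd⟩) i ∧ bump b (π ⟨0, hd⟩) i ≤ r i - 2)
    ∧ Door φ (bump b (π ⟨0, hd⟩)) (π * cyc hd) (Fin.last d)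
    ∧ partner hd (bump b (π ⟨0, hd⟩), π * cyc hd, Fin.last d) = (b, π, 0) := by
  have hne2 : b (π ⟨0, hd⟩) ≠ r (π ⟨0, hd⟩) - 2 :=
    fun h => no_top_door hd r hr φ hvalid b π hb hdoor h
  refine ⟨?_, (door_up hd φ b π).1 hdoor, ?_⟩
  · intro i
    unfold bump
    by_cases hi : i = π ⟨0, hd⟩
    · subst hi
      rw [if_pos rfl]
      have h1 := (hb (π ⟨0, hd⟩)).1
      have h2 := (hb (π ⟨0, hd⟩)).2
      omega
    · rw [if_neg hi]
      exact hb i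
  · rw [partner_evalLast]
    have hcalc : (π * cyc hd) ⟨d-1, by omega⟩ = π ⟨0, hd⟩ := by
      show π (cyc hd ⟨d-1, by omega⟩) = _
      congr 1
      apply Fin.ext
      rw [cyc_val]
      simp
    rw [hcalc, dropf_bump]
    have h2 : π * cyc hd * (cyc hd).symm = π := by
      rw [mul_assoc]
      simp [Equiv.Perm.mul_symm]
    rw [h2]

lemma props_last (hd : 0 < d) (r : Fin d → ℤ) (hr : ∀ i, 2 ≤ r i)
    (φ : (Fin d → ℤ) → Fin (d + 1))
    (hvalid : ∀ p : Fin d → ℤ, (∀ i, 0 ≤ p i ∧ p i ≤ r i - 1) →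
      (∀ h : (Finset.univ.filter (fun i => p i = 0)).Nonempty,
        φ p = Fin.castSucc ((Finset.univ.filter (fun i => p i = 0)).max' h)) ∧
      ((∀ i, p i ≠ 0) → (∃ i, p i = r i - 1) → φ p = Fin.last d))
    (b : Fin d → ℤ) (π : Equiv.Perm (Fin d))
    (hb : ∀ i, 0 ≤ b i ∧ b i ≤ r i - 2) (hdoor : Door φ b π (Fin.last d))
    (hnot : ¬ (b = (fun _ => 0) ∧ π = Fin.revPerm)) :
    (∀ i, 0 ≤ dropf b (π ⟨d-1, by omega⟩) i ∧ dropf b (π ⟨d-1, by omega⟩) i ≤ r i - 2)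
    ∧ Door φ (dropf b (π ⟨d-1, by omega⟩)) (π * (cyc hd).symm) 0
    ∧ partner hd (dropf b (π ⟨d-1, by omega⟩), π * (cyc hd).symm, (0 : Fin (d+1)))
        = (b, π, Fin.last d) := by
  have hb0 : b (π ⟨d-1, by omega⟩) ≠ 0 := by
    intro h
    exact hnot (bottom_door_unique hd r hr φ hvalid b π hb hdoor h)
  refine ⟨?_, (door_down hd φ b π).1 hdoor, ?_⟩
  · intro i
    unfold dropf
    by_cases hi : i = π ⟨d-1, by omega⟩
    · subst hi
      rw [if_pos rfl]
      have h1 := (hb (π ⟨d-1, by omega⟩)).1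
      have h2 := (hb (π ⟨d-1, by omega⟩)).2
      omega
    · rw [if_neg hi]
      exact hb i
  · rw [partner_eval0]
    have hcalc : (π * (cyc hd).symm) ⟨0, hd⟩ = π ⟨d-1, by omega⟩ := by
      show π ((cyc hd).symm ⟨0, hd⟩) = _
      congr 1
      apply Fin.ext
      rw [cyc_symm_val]
      simp
    rw [hcalc, bump_dropf]
    have h2 : π * (cyc hd).symm * cyc hd = π := by
      rw [mul_assoc]
      simp [Equiv.Perm.symm_mul]
    rw [h2]

lemma props_mid (hd : 0 < d) (φ : (Fin d → ℤ) → Fin (d + 1))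
    (b : Fin d → ℤ) (π : Equiv.Perm (Fin d)) (k : Fin (d+1))
    (hk0 : k ≠ 0) (hkl : k ≠ Fin.last d) (hdoor : Door φ b π k) :
    ∃ (hk1 : (k : ℕ) - 1 < d) (hkd : (k : ℕ) < d),
      Door φ b (π * Equiv.swap (⟨(k : ℕ) - 1, hk1⟩ : Fin d) (⟨(k : ℕ), hkd⟩ : Fin d)) k
      ∧ π * Equiv.swap (⟨(k : ℕ) - 1, hk1⟩ : Fin d) (⟨(k : ℕ), hkd⟩ : Fin d) ≠ π
      ∧ partner hd (b, π * Equiv.swap (⟨(k : ℕ) - 1, hk1⟩ : Fin d) (⟨(k : ℕ), hkd⟩ : Fin d), k)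
          = (b, π, k) := by
  have hkd : (k : ℕ) < d := by
    have h1 := k.isLt
    have h2 : (k : ℕ) ≠ d := fun h => hkl (Fin.ext h)
    omega
  have hk1 : (k : ℕ) - 1 < d := by omega
  have hkv0 : (k : ℕ) ≠ 0 := fun h => hk0 (Fin.ext h)
  have hne : (⟨(k : ℕ) - 1, hk1⟩ : Fin d) ≠ (⟨(k : ℕ), hkd⟩ : Fin d) := by
    intro h
    have := congrArg Fin.val h
    simp only at this
    omega
  refine ⟨hk1, hkd, (door_mid φ b π k hk1 hkd).2 hdoor, ?_, ?_⟩
  · intro h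
    have h2 : π * Equiv.swap (⟨(k : ℕ) - 1, hk1⟩ : Fin d) (⟨(k : ℕ), hkd⟩ : Fin d) = π * 1 := by
      rw [h, mul_one]
    have h3 := mul_left_cancel h2
    exact hne (Equiv.swap_eq_one_iff.1 h3)
  · rw [partner_evalMid hd _ _ k hk0 hkl hk1 hkd]
    rw [mul_assoc, Equiv.swap_mul_self, mul_one]

end DBF
/-- High-dimensional discrete Brouwer fixed point theorem: any valid coloring of the
hypergrid `A = {q : 0 ≤ qᵢ ≤ rᵢ - 1}` with `d+1` colors has a panchromatic unit hypercube. -/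
theorem discrete_brouwer_fixed_point
    (d : ℕ) (hd : 1 ≤ d) (r : Fin d → ℤ) (hr : ∀ i, 2 ≤ r i)
    (φ : (Fin d → ℤ) → Fin (d + 1))
    (hvalid : ∀ p : Fin d → ℤ, (∀ i, 0 ≤ p i ∧ p i ≤ r i - 1) →
      (∀ h : (Finset.univ.filter (fun i => p i = 0)).Nonempty,
        φ p = Fin.castSucc ((Finset.univ.filter (fun i => p i = 0)).max' h)) ∧
      ((∀ i, p i ≠ 0) → (∃ i, p i = r i - 1) → φ p = Fin.last d)) :
    ∃ p : Fin d → ℤ, (∀ i, 0 ≤ p i ∧ p i ≤ r i - 2) ∧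
      ∀ c : Fin (d + 1), ∃ q : Fin d → ℤ,
        (∀ i, q i = p i ∨ q i = p i + 1) ∧ φ q = c := by
  classical
  have hd0 : 0 < d := hd
  set B : Finset (Fin d → ℤ) := Fintype.piFinset (fun i => Finset.Icc 0 (r i - 2)) with hB
  have hBmem : ∀ b : Fin d → ℤ, b ∈ B ↔ ∀ i, 0 ≤ b i ∧ b i ≤ r i - 2 := by
    intro b
    rw [hB, Fintype.mem_piFinset]
    simp [Finset.mem_Icc]
  set P := B ×ˢ (Finset.univ : Finset (Equiv.Perm (Fin d)))
      ×ˢ (Finset.univ : Finset (Fin (d+1))) with hP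
  set S := P.filter (fun t => DBF.Door φ t.1 t.2.1 t.2.2) with hS
  have hmemS : ∀ t : (Fin d → ℤ) × Equiv.Perm (Fin d) × Fin (d+1),
      t ∈ S ↔ ((∀ i, 0 ≤ t.1 i ∧ t.1 i ≤ r i - 2) ∧ DBF.Door φ t.1 t.2.1 t.2.2) := by
    intro t
    rw [hS, Finset.mem_filter, hP, Finset.mem_product, Finset.mem_product]
    simp only [Finset.mem_univ, and_true]
    rw [hBmem t.1]
  have ht₀S : ((fun _ => (0:ℤ)), (Fin.revPerm : Equiv.Perm (Fin d)), Fin.last d) ∈ S := by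
    rw [hmemS]
    refine ⟨fun i => ⟨le_refl 0, ?_⟩, DBF.t0_door hd0 r hr φ hvalid⟩
    show (0:ℤ) ≤ r i - 2
    have := hr i
    omega
  -- main properties of the pairing on S minus the special corner triple
  have hmain : ∀ a ∈ S.erase ((fun _ => (0:ℤ)), (Fin.revPerm : Equiv.Perm (Fin d)), Fin.last d),
      (DBF.partner hd0 a ∈ S.erase ((fun _ => (0:ℤ)), (Fin.revPerm : Equiv.Perm (Fin d)), Fin.last d))
      ∧ DBF.partner hd0 a ≠ a
      ∧ DBF.partner hd0 (DBF.partner hd0 a) = a := by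
    intro a ha
    obtain ⟨hane, haS⟩ := Finset.mem_erase.1 ha
    rw [hmemS] at haS
    obtain ⟨hab, hadoor⟩ := haS
    obtain ⟨b, π, k⟩ := a
    by_cases hk0 : k = 0
    · subst hk0
      obtain ⟨hb', hdoor', hpp⟩ := DBF.props_zero hd0 r hr φ hvalid b π hab hadoor
      have heval := DBF.partner_eval0 hd0 b π
      refine ⟨?_, ?_, ?_⟩
      · rw [heval]
        refine Finset.mem_erase.2 ⟨?_, (hmemS _).2 ⟨hb', hdoor'⟩⟩
        intro hEq
        have h1 : DBF.bump b (π ⟨0, hd0⟩) = (fun _ => (0:ℤ)) := congrArg Prod.fst hEq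
        have h2 := congrFun h1 (π ⟨0, hd0⟩)
        have h3 : DBF.bump b (π ⟨0, hd0⟩) (π ⟨0, hd0⟩) = b (π ⟨0, hd0⟩) + 1 := by
          unfold DBF.bump
          rw [if_pos rfl]
        have h4 : (0:ℤ) ≤ b (π ⟨0, hd0⟩) := (hab (π ⟨0, hd0⟩)).1
        rw [h3] at h2
        have h2' : b (π ⟨0, hd0⟩) + 1 = (0:ℤ) := h2
        omega
      · rw [heval]
        intro hEq
        have := congrArg (fun t => t.2.2) hEq
        simp only at this
        exact DBF.last_ne_zero hd0 this
      · rw [heval, hpp]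
    · by_cases hkl : k = Fin.last d
      · subst hkl
        have hnot : ¬ (b = (fun _ => (0:ℤ)) ∧ π = Fin.revPerm) := by
          intro h
          exact hane (by rw [h.1, h.2])
        obtain ⟨hb', hdoor', hpp⟩ := DBF.props_last hd0 r hr φ hvalid b π hab hadoor hnot
        have heval := DBF.partner_evalLast hd0 b π
        refine ⟨?_, ?_, ?_⟩
        · rw [heval]
          refine Finset.mem_erase.2 ⟨?_, (hmemS _).2 ⟨hb', hdoor'⟩⟩
          intro hEq
          have := congrArg (fun t => t.2.2) hEq
          simp only at this
          exact DBF.last_ne_zero hd0 this.symm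
        · rw [heval]
          intro hEq
          have := congrArg (fun t => t.2.2) hEq
          simp only at this
          exact DBF.last_ne_zero hd0 this.symm
        · rw [heval, hpp]
      · obtain ⟨hk1, hkd, hdoor', hπne, hpp⟩ := DBF.props_mid hd0 φ b π k hk0 hkl hadoor
        have heval := DBF.partner_evalMid hd0 b π k hk0 hkl hk1 hkd
        refine ⟨?_, ?_, ?_⟩
        · rw [heval]
          refine Finset.mem_erase.2 ⟨?_, (hmemS _).2 ⟨hab, hdoor'⟩⟩
          intro hEq
          have := congrArg (fun t => t.2.2) hEq
          simp only at this
          exact hkl this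
        · rw [heval]
          intro hEq
          have := congrArg (fun t => t.2.1) hEq
          simp only at this
          exact hπne this
        · rw [heval, hpp]
  -- parity: |S| is odd
  have hcard1 : ((S.card : ZMod 2)) = 1 := by
    have hzero : ∑ _x ∈ S.erase ((fun _ => (0:ℤ)), (Fin.revPerm : Equiv.Perm (Fin d)), Fin.last d),
        (1 : ZMod 2) = 0 := by
      apply Finset.sum_involution (fun a _ => DBF.partner hd0 a)
      · intro a ha
        decide
      · intro a ha _
        exact (hmain a ha).2.1
      · intro a ha
        exact (hmain a ha).1
      · intro a ha
        exact (hmain a ha).2.2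
    have hec : (S.erase ((fun _ => (0:ℤ)), (Fin.revPerm : Equiv.Perm (Fin d)), Fin.last d)).card + 1
        = S.card := Finset.card_erase_add_one ht₀S
    have hsumcard : ∑ _x ∈ S.erase ((fun _ => (0:ℤ)), (Fin.revPerm : Equiv.Perm (Fin d)), Fin.last d),
        (1 : ZMod 2) = ((S.erase ((fun _ => (0:ℤ)), (Fin.revPerm : Equiv.Perm (Fin d)), Fin.last d)).card : ZMod 2) := by
      rw [Finset.sum_const, nsmul_eq_mul, mul_one]
    have : (S.card : ZMod 2) = ((S.erase ((fun _ => (0:ℤ)), (Fin.revPerm : Equiv.Perm (Fin d)), Fin.last d)).card : ZMod 2) + 1 := by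
      rw [← hec]
      push_cast
      rfl
    rw [this, ← hsumcard, hzero, zero_add]
  -- counting doors per simplex
  have hsum : (S.card : ZMod 2) = ∑ b ∈ B, ∑ π ∈ (Finset.univ : Finset (Equiv.Perm (Fin d))),
      (if Function.Bijective (fun k : Fin (d+1) => φ (DBF.vtx b π (k : ℕ))) then (1:ZMod 2) else 0) := by
    have h1 : (S.card : ZMod 2)
        = ∑ t ∈ P, (if DBF.Door φ t.1 t.2.1 t.2.2 then (1:ZMod 2) else 0) := by
      rw [Finset.sum_boole, hS]
    rw [h1, hP, Finset.sum_product]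
    apply Finset.sum_congr rfl
    intro b _
    rw [Finset.sum_product]
    apply Finset.sum_congr rfl
    intro π _
    have h2 : ∑ k ∈ (Finset.univ : Finset (Fin (d+1))),
        (if DBF.Door φ b π k then (1:ZMod 2) else 0)
        = (((Finset.univ.filter (fun k : Fin (d+1) =>
            (Finset.univ.erase k).image (fun m : Fin (d+1) => φ (DBF.vtx b π (m : ℕ)))
              = Finset.univ.erase (Fin.last d))).card : ZMod 2)) := by
      rw [Finset.sum_boole]
      unfold DBF.Door
      congr 2
      apply Finset.filter_congr_decidable
    rw [h2, DBF.doorcard]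
  -- existence of a fully-colored simplex
  have hex : ∃ b ∈ B, ∃ π : Equiv.Perm (Fin d),
      Function.Bijective (fun k : Fin (d+1) => φ (DBF.vtx b π (k : ℕ))) := by
    by_contra hc
    push_neg at hc
    have h0 : ∑ b ∈ B, ∑ π ∈ (Finset.univ : Finset (Equiv.Perm (Fin d))),
        (if Function.Bijective (fun k : Fin (d+1) => φ (DBF.vtx b π (k : ℕ))) then (1:ZMod 2) else 0) = 0 :=
      Finset.sum_eq_zero (fun b hb => Finset.sum_eq_zero (fun π _ => if_neg (hc b hb π)))
    have : (1 : ZMod 2) = 0 := by rw [← hcard1, hsum, h0]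
    exact one_ne_zero this
  obtain ⟨b, hbB, π, hbij⟩ := hex
  refine ⟨b, (hBmem b).1 hbB, ?_⟩
  intro c
  obtain ⟨k, hk⟩ := hbij.2 c
  refine ⟨DBF.vtx b π (k : ℕ), ?_, hk⟩
  intro i
  unfold DBF.vtx
  by_cases h : ((π.symm i : Fin d) : ℕ) < (k : ℕ)
  · right
    rw [if_pos h]
  · left
    rw [if_neg h, add_zero]
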